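/- Define ρ : [0,∞) → ℝ by ρ(x) = x/e for 0 ≤ x ≤ e and ρ(x) = log x for x ≥ e, and define Φ : [0,∞) → ℝ by Φ(z) = exp( ∫_0^z 1/(1 + x + x·ρ(x)) dx ). Then Φ is differentiable with Φ'(z) = Φ(z)/(1 + z + z·ρ(z)) for all z ≥ 0, Φ is concave on [0,∞), and Φ(z) → ∞ as z → ∞. -/

import Mathlib

noncomputable def ρ (x : ℝ) : ℝ :=
  if x ≤ Real.exp 1 then x / Real.exp 1 else Real.log x

noncomputable def Φ (z : ℝ) : ℝ :=
  Real.exp (∫ x in (0:ℝ)..z, 1 / (1 + x + x * ρ x))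

open Real intervalIntegral

namespace Stmt15Aux

noncomputable def g (x : ℝ) : ℝ := 1 + x + x * ρ x

noncomputable def f (x : ℝ) : ℝ := 1 / g x

noncomputable def gd (x : ℝ) : ℝ :=
  if x ≤ Real.exp 1 then 1 + 2 * x / Real.exp 1 else 2 + Real.log x

lemma exp_one_pos : (0:ℝ) < Real.exp 1 := Real.exp_pos 1

lemma g_pos (x : ℝ) : 0 < g x := by
  unfold g ρ
  split_ifs with h
  · have he : Real.exp 1 < 4 := by
      have := Real.exp_one_lt_d9; linarith
    have he0 := exp_one_pos
    rw [div_eq_mul_inv]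
    have : 0 < Real.exp 1 + Real.exp 1 * x + x * x := by
      nlinarith [sq_nonneg (2 * x + Real.exp 1)]
    have := mul_pos this (inv_pos.mpr he0)
    calc (0:ℝ) < (Real.exp 1 + Real.exp 1 * x + x * x) * (Real.exp 1)⁻¹ := this
      _ = 1 + x + x * (x * (Real.exp 1)⁻¹) := by field_simp
  · push_neg at h
    have hx1 : (1:ℝ) < x := lt_trans (by linarith [Real.exp_one_gt_d9]) h
    have hlog : 1 < Real.log x := by
      rw [show (1:ℝ) = Real.log (Real.exp 1) by simp]
      exact Real.log_lt_log exp_one_pos h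
    nlinarith

lemma g_ne (x : ℝ) : g x ≠ 0 := (g_pos x).ne'

lemma continuous_ρ : Continuous ρ := by
  rw [continuous_iff_continuousAt]
  intro x
  rcases lt_trichotomy x (Real.exp 1) with h | h | h
  · have : ρ =ᶠ[nhds x] fun y => y / Real.exp 1 := by
      filter_upwards [Iio_mem_nhds h] with y hy
      simp [ρ, (Set.mem_Iio.mp hy).le]
    exact ((continuous_id.div_const (Real.exp 1)).continuousAt).congr this.symm
  · subst h
    rw [← continuousWithinAt_univ, ← Set.Iic_union_Ici (a := Real.exp 1)]
    apply ContinuousWithinAt.union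
    · apply ContinuousWithinAt.congr
        (((continuous_id.div_const (Real.exp 1)).continuousAt).continuousWithinAt
          (s := Set.Iic (Real.exp 1)))
      · intro y hy; simp [ρ, hy.out]
      · simp [ρ]
    · apply ContinuousWithinAt.congr
        ((Real.continuousAt_log exp_one_pos.ne').continuousWithinAt
          (s := Set.Ici (Real.exp 1)))
      · intro y hy
        rcases eq_or_lt_of_le hy.out with h | h
        · simp [ρ, ← h]
        · simp [ρ, not_le.mpr h]
      · simp [ρ]
  · have : ρ =ᶠ[nhds x] Real.log := by
      filter_upwards [Ioi_mem_nhds h] with y hy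
      simp [ρ, not_le.mpr hy.out]
    exact ((Real.continuousAt_log (lt_trans exp_one_pos h).ne').congr this.symm)

lemma continuous_g : Continuous g := by
  exact (continuous_const.add continuous_id).add (continuous_id.mul continuous_ρ)

lemma continuous_f : Continuous f :=
  continuous_const.div continuous_g g_ne

lemma hasDerivAt_g (x : ℝ) : HasDerivAt g (gd x) x := by
  have hpoly : ∀ y : ℝ, HasDerivAt (fun t => 1 + t + t * (t / Real.exp 1))
      (1 + 2 * y / Real.exp 1) y := by
    intro y
    have : HasDerivAt (fun t : ℝ => 1 + t + t * (t / Real.exp 1))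
        (0 + 1 + (1 * (y / Real.exp 1) + y * (1 / Real.exp 1))) y := by
      exact ((hasDerivAt_const y (1:ℝ)).add (hasDerivAt_id y)).add
        ((hasDerivAt_id y).mul ((hasDerivAt_id y).div_const _))
    convert this using 1; field_simp; ring
  have hlogf : ∀ y : ℝ, 0 < y → HasDerivAt (fun t => 1 + t + t * Real.log t)
      (2 + Real.log y) y := by
    intro y hy
    have : HasDerivAt (fun t : ℝ => 1 + t + t * Real.log t)
        (0 + 1 + (1 * Real.log y + y * y⁻¹)) y := by
      exact ((hasDerivAt_const y (1:ℝ)).add (hasDerivAt_id y)).add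
        ((hasDerivAt_id y).mul (Real.hasDerivAt_log hy.ne'))
    convert this using 1
    field_simp
    ring
  rcases lt_trichotomy x (Real.exp 1) with h | h | h
  · have heq : g =ᶠ[nhds x] fun t => 1 + t + t * (t / Real.exp 1) := by
      filter_upwards [Iio_mem_nhds h] with y hy
      simp [g, ρ, le_of_lt hy.out]
    rw [show gd x = 1 + 2 * x / Real.exp 1 by simp [gd, le_of_lt h]]
    exact (hpoly x).congr_of_eventuallyEq heq
  · subst h
    have hval : gd (Real.exp 1) = 1 + 2 * Real.exp 1 / Real.exp 1 := by simp [gd]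
    rw [hval]
    rw [← hasDerivWithinAt_univ, ← Set.Iic_union_Ici (a := Real.exp 1)]
    apply HasDerivWithinAt.union
    · apply HasDerivWithinAt.congr ((hpoly _).hasDerivWithinAt)
      · intro y hy; simp [g, ρ, hy.out]
      · simp [g, ρ]
    · have h3 : (1 + 2 * Real.exp 1 / Real.exp 1 : ℝ) = 2 + Real.log (Real.exp 1) := by
        rw [Real.log_exp]; field_simp; norm_num
      rw [h3]
      apply HasDerivWithinAt.congr ((hlogf _ exp_one_pos).hasDerivWithinAt)
      · intro y hy
        rcases eq_or_lt_of_le hy.out with h | h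
        · simp [g, ρ, ← h]
        · simp [g, ρ, not_le.mpr h]
      · simp [g, ρ]
  · have heq : g =ᶠ[nhds x] fun t => 1 + t + t * Real.log t := by
      filter_upwards [Ioi_mem_nhds h] with y hy
      simp [g, ρ, not_le.mpr hy.out]
    rw [show gd x = 2 + Real.log x by simp [gd, not_le.mpr h]]
    exact (hlogf x (lt_trans exp_one_pos h)).congr_of_eventuallyEq heq

lemma gd_ge_one {x : ℝ} (hx : 0 ≤ x) : 1 ≤ gd x := by
  unfold gd
  split_ifs with h
  · have h2 : 0 ≤ 2 * x / Real.exp 1 := by positivity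
    linarith
  · push_neg at h
    have : 1 ≤ Real.log x := by
      rw [show (1:ℝ) = Real.log (Real.exp 1) by simp]
      exact Real.log_le_log exp_one_pos h.le
    linarith

lemma hasDerivAt_f (x : ℝ) : HasDerivAt f (-gd x / g x ^ 2) x := by
  have := (hasDerivAt_const x (1:ℝ)).div (hasDerivAt_g x) (g_ne x)
  convert this using 1
  exacts [rfl, rfl, rfl, by ring]

noncomputable def F (z : ℝ) : ℝ := ∫ x in (0:ℝ)..z, f x

lemma hasDerivAt_F (z : ℝ) : HasDerivAt F (f z) z :=
  integral_hasDerivAt_right ((continuous_f.intervalIntegrable _ _))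
    (continuous_f.stronglyMeasurableAtFilter _ _) continuous_f.continuousAt

lemma Phi_eq (z : ℝ) : Φ z = Real.exp (F z) := rfl

lemma hasDerivAt_Phi (z : ℝ) : HasDerivAt Φ (Φ z * f z) z :=
  (hasDerivAt_F z).exp

lemma hasDerivAt_Phi' (z : ℝ) :
    HasDerivAt (fun z => Φ z * f z)
      (Φ z * f z * f z + Φ z * (-gd z / g z ^ 2)) z :=
  (hasDerivAt_Phi z).mul (hasDerivAt_f z)

lemma Phi_pos (z : ℝ) : 0 < Φ z := Real.exp_pos _

lemma second_nonpos {z : ℝ} (hz : 0 ≤ z) :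
    Φ z * f z * f z + Φ z * (-gd z / g z ^ 2) ≤ 0 := by
  have hg := g_pos z
  have hgd := gd_ge_one hz
  have hΦ := Phi_pos z
  have hf : f z = 1 / g z := rfl
  rw [hf]
  have key : Φ z * (1 / g z) * (1 / g z) + Φ z * (-gd z / g z ^ 2)
      = Φ z * (1 - gd z) / g z ^ 2 := by
    field_simp
    ring
  rw [key]
  apply div_nonpos_of_nonpos_of_nonneg
  · nlinarith
  · positivity

lemma rho_eq_log {x : ℝ} (hx : Real.exp 1 ≤ x) : ρ x = Real.log x := by
  unfold ρ
  split_ifs with h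
  · have hxe : x = Real.exp 1 := le_antisymm h hx
    subst hxe
    rw [Real.log_exp]
    field_simp
  · rfl

lemma F_lower {z : ℝ} (hez : Real.exp 1 ≤ z) :
    F (Real.exp 1) + (1/3) * Real.log (Real.log z) ≤ F z := by
  have hint1 : IntervalIntegrable f MeasureTheory.volume 0 (Real.exp 1) :=
    continuous_f.intervalIntegrable _ _
  have hint2 : IntervalIntegrable f MeasureTheory.volume (Real.exp 1) z :=
    continuous_f.intervalIntegrable _ _
  have hsplit : F z = F (Real.exp 1) + ∫ x in (Real.exp 1)..z, f x := by
    rw [F, F, ← intervalIntegral.integral_add_adjacent_intervals hint1 hint2]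
  rw [hsplit]
  have huicc : Set.uIcc (Real.exp 1) z = Set.Icc (Real.exp 1) z := Set.uIcc_of_le hez
  -- facts on the interval
  have hfacts : ∀ x ∈ Set.Icc (Real.exp 1) z, 0 < x ∧ 1 ≤ Real.log x := by
    intro x hx
    have hx0 : 0 < x := lt_of_lt_of_le exp_one_pos hx.1
    refine ⟨hx0, ?_⟩
    calc (1:ℝ) = Real.log (Real.exp 1) := by simp
      _ ≤ Real.log x := Real.log_le_log exp_one_pos hx.1
  -- continuity of the lower bound
  have hcont : ContinuousOn (fun x : ℝ => 1/(3*(x * Real.log x)))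
      (Set.uIcc (Real.exp 1) z) := by
    rw [huicc]
    apply ContinuousOn.div continuousOn_const
    · apply continuousOn_const.mul
      apply continuousOn_id.mul
      apply Real.continuousOn_log.mono
      intro x hx
      exact (hfacts x hx).1.ne'
    · intro x hx
      obtain ⟨hx0, hlog⟩ := hfacts x hx
      positivity
  have hintlb : IntervalIntegrable (fun x : ℝ => 1/(3*(x * Real.log x)))
      MeasureTheory.volume (Real.exp 1) z := hcont.intervalIntegrable
  -- evaluate the lower bound integral
  have heval : ∫ x in (Real.exp 1)..z, 1/(3*(x * Real.log x))
      = (1/3) * Real.log (Real.log z) - (1/3) * Real.log (Real.log (Real.exp 1)) := by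
    apply intervalIntegral.integral_eq_sub_of_hasDerivAt
    · intro x hx
      rw [huicc] at hx
      obtain ⟨hx0, hlog⟩ := hfacts x hx
      have hlog0 : Real.log x ≠ 0 := by linarith
      have h1 : HasDerivAt (fun y : ℝ => Real.log (Real.log y))
          (x⁻¹ / Real.log x) x := (Real.hasDerivAt_log hx0.ne').log hlog0
      have h2 := h1.const_mul (1/3 : ℝ)
      convert h2 using 1
      exacts [rfl, by ring]
    · exact hintlb
  -- compare
  have hmono : ∫ x in (Real.exp 1)..z, 1/(3*(x * Real.log x))
      ≤ ∫ x in (Real.exp 1)..z, f x := by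
    apply intervalIntegral.integral_mono_on hez hintlb hint2
    intro x hx
    obtain ⟨hx0, hlog⟩ := hfacts x hx
    have hρ : ρ x = Real.log x := rho_eq_log hx.1
    have hgx : g x = 1 + x + x * Real.log x := by rw [g, hρ]
    have hxlog : x ≤ x * Real.log x := by nlinarith
    have h1x : 1 ≤ x := le_trans (by nlinarith [Real.exp_one_gt_d9]) hx.1
    have h1 : (1:ℝ) ≤ x * Real.log x := by nlinarith
    have hle : g x ≤ 3 * (x * Real.log x) := by rw [hgx]; nlinarith
    rw [f]
    apply one_div_le_one_div_of_le (g_pos x) hle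
  have heval' : ∫ x in (Real.exp 1)..z, 1/(3*(x * Real.log x))
      = (1/3) * Real.log (Real.log z) := by rw [heval]; simp
  linarith [hmono]

lemma tendsto_F : Filter.Tendsto F Filter.atTop Filter.atTop := by
  have h1 : Filter.Tendsto (fun z : ℝ => Real.log (Real.log z))
      Filter.atTop Filter.atTop := Real.tendsto_log_atTop.comp Real.tendsto_log_atTop
  have h2 : Filter.Tendsto (fun z : ℝ => F (Real.exp 1) + (1/3) * Real.log (Real.log z))
      Filter.atTop Filter.atTop := by
    apply Filter.tendsto_atTop_add_const_left
    exact h1.const_mul_atTop (by norm_num)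
  apply Filter.tendsto_atTop_mono' _ _ h2
  filter_upwards [Filter.eventually_ge_atTop (Real.exp 1)] with z hz
  exact F_lower hz

end Stmt15Aux

theorem stmt_15 :
    (∀ z : ℝ, 0 ≤ z →
      HasDerivWithinAt Φ (Φ z / (1 + z + z * ρ z)) (Set.Ici 0) z) ∧
    ConcaveOn ℝ (Set.Ici 0) Φ ∧
    Filter.Tendsto Φ Filter.atTop Filter.atTop := by
  refine ⟨?_, ?_, ?_⟩
  · intro z _
    have h := (Stmt15Aux.hasDerivAt_Phi z).hasDerivWithinAt (s := Set.Ici (0:ℝ))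
    have : Φ z / (1 + z + z * ρ z) = Φ z * Stmt15Aux.f z := by
      rw [Stmt15Aux.f, Stmt15Aux.g, div_eq_mul_one_div]
    rw [this]
    exact h
  · apply concaveOn_of_hasDerivWithinAt2_nonpos (convex_Ici 0)
      (f' := fun z => Φ z * Stmt15Aux.f z)
      (f'' := fun z => Φ z * Stmt15Aux.f z * Stmt15Aux.f z
        + Φ z * (-Stmt15Aux.gd z / Stmt15Aux.g z ^ 2))
    · exact fun x _ => (Stmt15Aux.hasDerivAt_Phi x).continuousAt.continuousWithinAt
    · exact fun x _ => (Stmt15Aux.hasDerivAt_Phi x).hasDerivWithinAt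
    · exact fun x _ => (Stmt15Aux.hasDerivAt_Phi' x).hasDerivWithinAt
    · intro x hx
      rw [interior_Ici] at hx
      exact Stmt15Aux.second_nonpos (le_of_lt hx)
  · exact Real.tendsto_exp_atTop.comp Stmt15Aux.tendsto_F
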